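/- (a) The unique left L#W-module homomorphism ε: 𝓛#W → L#W with ε(a·μw) = a·w for all a ∈ L, μ ∈ M, w ∈ W satisfies ε(X·ε(Y)) = ε(X·Y) for all X, Y ∈ 𝓛#W. (b) The map sending X ∈ 𝓛#W to the additive endomorphism a ↦ ε(X·a) of L#W is a ring homomorphism from 𝓛#W to the endomorphism ring of the additive group of L#W. -/

import Mathlib

noncomputable section

namespace EpsLemma

variable (L : Type) [Field L]

/-- Left multiplication by `a ∈ L`, as an additive endomorphism of `L`. -/
def mulE (a : L) : AddMonoid.End L := AddMonoidHom.mulLeft a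

/-- A ring automorphism of `L`, as an additive endomorphism of `L`. -/
def ofAut (g : RingAut L) : AddMonoid.End L := g.toAddEquiv.toAddMonoidHom

/-- The skew monoid ring `𝓛#W = L#(M·W)`, realized (via its faithful action on `L`,
which identifies it with the set of finite sums `Σ aᵢ·(μᵢwᵢ)` by Dedekind's independence
of automorphisms) as the subring of additive endomorphisms of `L` generated by all left
multiplications together with the automorphisms `μ∘w`, `μ ∈ M`, `w ∈ W`. -/
def bigL (M : Submonoid (RingAut L)) (W : Subgroup (RingAut L)) :
    Subring (AddMonoid.End L) :=
  Subring.closure (Set.range (mulE L) ∪ {Y | ∃ μ ∈ M, ∃ w ∈ W, Y = ofAut L (μ * w)})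

/-- The skew group ring `L#W ⊆ 𝓛#W`: the `L`-span of `{1·w | w ∈ W}`. -/
def smallL (W : Subgroup (RingAut L)) : Subring (AddMonoid.End L) :=
  Subring.closure (Set.range (mulE L) ∪ {Y | ∃ w ∈ W, Y = ofAut L w})

/-- The defining properties of `ε : 𝓛#W → L#W`: it takes values in `L#W`, is additive,
is a homomorphism of left `L#W`-modules, and sends `a·μw` to `a·w`. -/
def IsEps (M : Submonoid (RingAut L)) (W : Subgroup (RingAut L))
    (ε : AddMonoid.End L → AddMonoid.End L) : Prop :=
  (∀ x ∈ bigL L M W, ε x ∈ smallL L W)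
  ∧ (∀ x ∈ bigL L M W, ∀ y ∈ bigL L M W, ε (x + y) = ε x + ε y)
  ∧ (∀ z ∈ smallL L W, ∀ x ∈ bigL L M W, ε (z * x) = z * ε x)
  ∧ (∀ (a : L), ∀ μ ∈ M, ∀ w ∈ W, ε (mulE L a * ofAut L (μ * w)) = mulE L a * ofAut L w)

end EpsLemma

namespace EpsAux
open EpsLemma

variable (L : Type) [Field L]

lemma smul_mul'' (a : L) (f g : AddMonoid.End L) : (a • f) * g = a • (f * g) :=
  AddMonoidHom.ext fun _ => rfl

lemma mulE_mul (a : L) (f : AddMonoid.End L) : mulE L a * f = a • f :=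
  AddMonoidHom.ext fun _ => rfl

lemma ofAut_smul (g : RingAut L) (a : L) (f : AddMonoid.End L) :
    ofAut L g * (a • f) = (g a) • (ofAut L g * f) := by
  refine AddMonoidHom.ext fun x => ?_
  show g (a * f x) = g a * g (f x)
  rw [map_mul]

lemma ofAut_mul (g h : RingAut L) : ofAut L (g * h) = ofAut L g * ofAut L h := rfl
lemma ofAut_one : ofAut L (1 : RingAut L) = 1 := rfl
lemma mulE_one : mulE L 1 = 1 := AddMonoidHom.ext fun x => one_mul x
lemma mulE_zero : mulE L 0 = 0 := AddMonoidHom.ext fun x => zero_mul x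
lemma mulE_eq_smul_one (a : L) : mulE L a = a • (1 : AddMonoid.End L) :=
  AddMonoidHom.ext fun _ => rfl

def coeLM : AddMonoid.End L →ₗ[L] (L → L) where
  toFun f := ⇑f
  map_add' _ _ := rfl
  map_smul' _ _ := rfl

variable (M : Submonoid (RingAut L)) (W : Subgroup (RingAut L))

def eB : (↥M × ↥W) → AddMonoid.End L :=
  fun p => ofAut L ((p.1 : RingAut L) * (p.2 : RingAut L))

def eS : ↥W → AddMonoid.End L := fun w => ofAut L (w : RingAut L)

def sB : Submodule L (AddMonoid.End L) := Submodule.span L (Set.range (eB L M W))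
def sS : Submodule L (AddMonoid.End L) := Submodule.span L (Set.range (eS L W))

lemma eS_eq_eB (w : ↥W) : eS L W w = eB L M W (⟨1, M.one_mem⟩, w) := by
  show ofAut L (w : RingAut L) = ofAut L ((1 : RingAut L) * w)
  rw [one_mul]

lemma sS_le_sB : sS L W ≤ sB L M W := by
  rw [sS, Submodule.span_le]
  rintro _ ⟨w, rfl⟩
  rw [eS_eq_eB L M W w]
  exact Submodule.subset_span ⟨_, rfl⟩

theorem liB (hinj : ∀ μ₁ ∈ M, ∀ μ₂ ∈ M, ∀ w₁ ∈ W, ∀ w₂ ∈ W,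
      μ₁ * w₁ = μ₂ * w₂ → μ₁ = μ₂ ∧ w₁ = w₂) : LinearIndependent L (eB L M W) := by
  have hg : Function.Injective
      (fun p : ↥M × ↥W => (((p.1 : RingAut L) * (p.2 : RingAut L) : RingAut L) : L →* L)) := by
    intro p q h
    have h2 : ((p.1 : RingAut L) * p.2 : RingAut L) = (q.1 : RingAut L) * q.2 := by
      ext x
      exact DFunLike.congr_fun h x
    obtain ⟨h3, h4⟩ := hinj _ p.1.2 _ q.1.2 _ p.2.2 _ q.2.2 h2
    exact Prod.ext (Subtype.ext h3) (Subtype.ext h4)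
  have h := (linearIndependent_monoidHom L L).comp _ hg
  exact LinearIndependent.of_comp (coeLM L) h

variable {L M W}

def pmul (hconj : ∀ w ∈ W, ∀ μ ∈ M, w * μ * w⁻¹ ∈ M) (p q : ↥M × ↥W) : ↥M × ↥W :=
  (⟨(p.1 : RingAut L) * ((p.2 : RingAut L) * q.1 * (p.2 : RingAut L)⁻¹),
    M.mul_mem p.1.2 (hconj _ p.2.2 _ q.1.2)⟩,
   ⟨(p.2 : RingAut L) * q.2, W.mul_mem p.2.2 q.2.2⟩)

lemma eB_pmul (hconj : ∀ w ∈ W, ∀ μ ∈ M, w * μ * w⁻¹ ∈ M) (p q : ↥M × ↥W) :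
    eB L M W (pmul hconj p q) = eB L M W p * eB L M W q := by
  simp only [eB, pmul, ← ofAut_mul]
  congr 1
  group

lemma sB_mul_mem (hconj : ∀ w ∈ W, ∀ μ ∈ M, w * μ * w⁻¹ ∈ M) {x y : AddMonoid.End L} (hx : x ∈ sB L M W) (hy : y ∈ sB L M W) :
    x * y ∈ sB L M W := by
  induction hx using Submodule.span_induction with
  | mem x hxx =>
    obtain ⟨p, rfl⟩ := hxx
    induction hy using Submodule.span_induction with
    | mem y hyy =>
      obtain ⟨q, rfl⟩ := hyy
      rw [← eB_pmul hconj]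
      exact Submodule.subset_span ⟨_, rfl⟩
    | zero => rw [mul_zero]; exact zero_mem _
    | add y z _ _ ihy ihz => rw [mul_add]; exact add_mem ihy ihz
    | smul c y _ ihy =>
      rw [show eB L M W p * (c • y)
            = (((p.1 : RingAut L) * p.2) c) • (eB L M W p * y) from ofAut_smul L _ c y]
      exact Submodule.smul_mem _ _ ihy
  | zero => rw [zero_mul]; exact zero_mem _
  | add x y _ _ ihx ihy => rw [add_mul]; exact add_mem ihx ihy
  | smul c x _ ihx => rw [smul_mul'']; exact Submodule.smul_mem _ _ ihx

lemma sS_mul_mem {x y : AddMonoid.End L} (hx : x ∈ sS L W) (hy : y ∈ sS L W) :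
    x * y ∈ sS L W := by
  induction hx using Submodule.span_induction with
  | mem x hxx =>
    obtain ⟨w, rfl⟩ := hxx
    induction hy using Submodule.span_induction with
    | mem y hyy =>
      obtain ⟨v, rfl⟩ := hyy
      rw [show eS L W w * eS L W v = eS L W (w * v) from rfl]
      exact Submodule.subset_span ⟨_, rfl⟩
    | zero => rw [mul_zero]; exact zero_mem _
    | add y z _ _ ihy ihz => rw [mul_add]; exact add_mem ihy ihz
    | smul c y _ ihy =>
      rw [show eS L W w * (c • y)
            = ((w : RingAut L) c) • (eS L W w * y) from ofAut_smul L _ c y]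
      exact Submodule.smul_mem _ _ ihy
  | zero => rw [zero_mul]; exact zero_mem _
  | add x y _ _ ihx ihy => rw [add_mul]; exact add_mem ihx ihy
  | smul c x _ ihx => rw [smul_mul'']; exact Submodule.smul_mem _ _ ihx

lemma one_mem_sB : (1 : AddMonoid.End L) ∈ sB L M W := by
  have h : eB L M W (⟨1, M.one_mem⟩, ⟨1, W.one_mem⟩) = 1 := by
    show ofAut L ((1 : RingAut L) * 1) = 1
    rw [mul_one, ofAut_one]
  rw [← h]
  exact Submodule.subset_span ⟨_, rfl⟩

lemma one_mem_sS : (1 : AddMonoid.End L) ∈ sS L W := by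
  have h : eS L W (1 : ↥W) = 1 := by
    show ofAut L ((1 : ↥W) : RingAut L) = 1
    rw [OneMemClass.coe_one, ofAut_one]
  rw [← h]
  exact Submodule.subset_span ⟨_, rfl⟩

lemma mulE_mem_sB (a : L) : mulE L a ∈ sB L M W := by
  rw [mulE_eq_smul_one]
  exact Submodule.smul_mem _ _ one_mem_sB

lemma mulE_mem_sS (a : L) : mulE L a ∈ sS L W := by
  rw [mulE_eq_smul_one]
  exact Submodule.smul_mem _ _ one_mem_sS

def sBR (hconj : ∀ w ∈ W, ∀ μ ∈ M, w * μ * w⁻¹ ∈ M) : Subring (AddMonoid.End L) where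
  carrier := sB L M W
  zero_mem' := zero_mem _
  add_mem' ha hb := add_mem ha hb
  neg_mem' ha := neg_mem ha
  one_mem' := one_mem_sB
  mul_mem' ha hb := sB_mul_mem hconj ha hb

def sSR : Subring (AddMonoid.End L) where
  carrier := sS L W
  zero_mem' := zero_mem _
  add_mem' ha hb := add_mem ha hb
  neg_mem' ha := neg_mem ha
  one_mem' := one_mem_sS
  mul_mem' ha hb := sS_mul_mem ha hb

lemma mem_bigL_iff (hconj : ∀ w ∈ W, ∀ μ ∈ M, w * μ * w⁻¹ ∈ M) {x : AddMonoid.End L} :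
    x ∈ bigL L M W ↔ x ∈ sB L M W := by
  constructor
  · intro hx
    have hle : bigL L M W ≤ sBR hconj := by
      rw [bigL]
      apply Subring.closure_le.mpr
      rintro y (⟨a, rfl⟩ | ⟨μ, hμ, w, hw, rfl⟩)
      · exact mulE_mem_sB a
      · exact Submodule.subset_span ⟨(⟨μ, hμ⟩, ⟨w, hw⟩), rfl⟩
    exact hle hx
  · intro hx
    induction hx using Submodule.span_induction with
    | mem y hy =>
      obtain ⟨p, rfl⟩ := hy
      exact Subring.subset_closure (Or.inr ⟨p.1, p.1.2, p.2, p.2.2, rfl⟩)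
    | zero => exact zero_mem _
    | add y z _ _ ihy ihz => exact add_mem ihy ihz
    | smul c y _ ihy =>
      rw [← mulE_mul]
      exact mul_mem (Subring.subset_closure (Or.inl ⟨c, rfl⟩)) ihy

lemma mem_smallL_iff {x : AddMonoid.End L} :
    x ∈ smallL L W ↔ x ∈ sS L W := by
  constructor
  · intro hx
    have hle : smallL L W ≤ sSR (L := L) (W := W) := by
      rw [smallL]
      apply Subring.closure_le.mpr
      rintro y (⟨a, rfl⟩ | ⟨w, hw, rfl⟩)
      · exact mulE_mem_sS a
      · exact Submodule.subset_span ⟨⟨w, hw⟩, rfl⟩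
    exact hle hx
  · intro hx
    induction hx using Submodule.span_induction with
    | mem y hy =>
      obtain ⟨w, rfl⟩ := hy
      exact Subring.subset_closure (Or.inr ⟨w, w.2, rfl⟩)
    | zero => exact zero_mem _
    | add y z _ _ ihy ihz => exact add_mem ihy ihz
    | smul c y _ ihy =>
      rw [← mulE_mul]
      exact mul_mem (Subring.subset_closure (Or.inl ⟨c, rfl⟩)) ihy

open Classical in
def eps (hinj : ∀ μ₁ ∈ M, ∀ μ₂ ∈ M, ∀ w₁ ∈ W, ∀ w₂ ∈ W,
      μ₁ * w₁ = μ₂ * w₂ → μ₁ = μ₂ ∧ w₁ = w₂) : AddMonoid.End L → AddMonoid.End L := fun x =>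
  if h : x ∈ sB L M W then
    Finsupp.linearCombination L (fun i : ↥M × ↥W => eS L W i.2) ((liB L M W hinj).repr ⟨x, h⟩)
  else 0

variable (hinj : ∀ μ₁ ∈ M, ∀ μ₂ ∈ M, ∀ w₁ ∈ W, ∀ w₂ ∈ W,
      μ₁ * w₁ = μ₂ * w₂ → μ₁ = μ₂ ∧ w₁ = w₂)

lemma eps_add {x y : AddMonoid.End L} (hx : x ∈ sB L M W) (hy : y ∈ sB L M W) :
    eps hinj (x + y) = eps hinj x + eps hinj y := by
  simp only [eps, dif_pos hx, dif_pos hy, dif_pos (add_mem hx hy)]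
  exact (congrArg (Finsupp.linearCombination L fun i : ↥M × ↥W => eS L W i.2)
    ((congrArg (liB L M W hinj).repr
      (show (⟨x + y, add_mem hx hy⟩ : sB L M W) = ⟨x, hx⟩ + ⟨y, hy⟩ from rfl)).trans
      (map_add _ _ _))).trans (map_add _ _ _)

lemma eps_smul (c : L) {x : AddMonoid.End L} (hx : x ∈ sB L M W) :
    eps hinj (c • x) = c • eps hinj x := by
  simp only [eps, dif_pos hx, dif_pos (Submodule.smul_mem _ c hx)]
  exact (congrArg (Finsupp.linearCombination L fun i : ↥M × ↥W => eS L W i.2)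
    ((congrArg (liB L M W hinj).repr
      (show (⟨c • x, Submodule.smul_mem _ c hx⟩ : sB L M W) = c • (⟨x, hx⟩ : sB L M W) from rfl)).trans
      (map_smul _ _ _))).trans (map_smul _ _ _)

lemma eps_gen (a : L) (p : ↥M × ↥W) :
    eps hinj (a • eB L M W p) = a • eS L W p.2 := by
  have hm : a • eB L M W p ∈ sB L M W :=
    Submodule.smul_mem _ _ (Submodule.subset_span ⟨p, rfl⟩)
  simp only [eps, dif_pos hm]
  rw [(liB L M W hinj).repr_eq (l := Finsupp.single p a)
    (by rw [Finsupp.linearCombination_single])]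
  rw [Finsupp.linearCombination_single]

lemma eps_genB (p : ↥M × ↥W) : eps hinj (eB L M W p) = eS L W p.2 := by
  have := eps_gen hinj 1 p
  rwa [one_smul, one_smul] at this

lemma eps_zero : eps hinj (0 : AddMonoid.End L) = 0 := by
  have := eps_gen hinj 0 (⟨1, M.one_mem⟩, ⟨1, W.one_mem⟩)
  rwa [zero_smul, zero_smul] at this

lemma eps_mem_sS {x : AddMonoid.End L} (hx : x ∈ sB L M W) : eps hinj x ∈ sS L W := by
  induction hx using Submodule.span_induction with
  | mem y hy =>
    obtain ⟨p, rfl⟩ := hy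
    rw [eps_genB]
    exact Submodule.subset_span ⟨p.2, rfl⟩
  | zero => rw [eps_zero]; exact zero_mem _
  | add y z hy hz ihy ihz => rw [eps_add hinj hy hz]; exact add_mem ihy ihz
  | smul c y hy ihy => rw [eps_smul hinj c hy]; exact Submodule.smul_mem _ _ ihy

lemma eps_id {x : AddMonoid.End L} (hx : x ∈ sS L W) : eps hinj x = x := by
  induction hx using Submodule.span_induction with
  | mem y hy =>
    obtain ⟨w, rfl⟩ := hy
    rw [eS_eq_eB L M W w, eps_genB]
    exact eS_eq_eB L M W w
  | zero => exact eps_zero hinj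
  | add y z hy hz ihy ihz =>
    rw [eps_add hinj (sS_le_sB L M W hy) (sS_le_sB L M W hz), ihy, ihz]
  | smul c y hy ihy => rw [eps_smul hinj c (sS_le_sB L M W hy), ihy]

lemma eps_mulhom (hconj : ∀ w ∈ W, ∀ μ ∈ M, w * μ * w⁻¹ ∈ M)
    {z x : AddMonoid.End L} (hz : z ∈ sS L W) (hx : x ∈ sB L M W) :
    eps hinj (z * x) = z * eps hinj x := by
  induction hz using Submodule.span_induction with
  | mem z hzz =>
    obtain ⟨w, rfl⟩ := hzz
    have hwB : eS L W w ∈ sB L M W := sS_le_sB L M W (Submodule.subset_span ⟨w, rfl⟩)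
    induction hx using Submodule.span_induction with
    | mem y hyy =>
      obtain ⟨p, rfl⟩ := hyy
      rw [eps_genB]
      have h1 : eS L W w * eB L M W p = eB L M W (pmul hconj (⟨1, M.one_mem⟩, w) p) := by
        rw [eB_pmul hconj, ← eS_eq_eB]
      rw [h1, eps_genB]
      rfl
    | zero => rw [mul_zero, eps_zero, mul_zero]
    | add y z hy hz ihy ihz =>
      rw [mul_add, eps_add hinj (sB_mul_mem hconj hwB hy) (sB_mul_mem hconj hwB hz),
        ihy, ihz, eps_add hinj hy hz, mul_add]
    | smul c y hy ihy =>
      rw [show eS L W w * (c • y) = ((w : RingAut L) c) • (eS L W w * y) from ofAut_smul L _ c y,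
        eps_smul hinj _ (sB_mul_mem hconj hwB hy), ihy, eps_smul hinj c hy]
      exact (ofAut_smul L _ c (eps hinj y)).symm
  | zero => rw [zero_mul, eps_zero, zero_mul]
  | add z₁ z₂ h1 h2 ih1 ih2 =>
    rw [add_mul, eps_add hinj (sB_mul_mem hconj (sS_le_sB L M W h1) hx)
      (sB_mul_mem hconj (sS_le_sB L M W h2) hx), ih1, ih2, add_mul]
  | smul c z₁ h1 ih =>
    rw [smul_mul'', eps_smul hinj c (sB_mul_mem hconj (sS_le_sB L M W h1) hx), ih, smul_mul'']

lemma eps_proj (hconj : ∀ w ∈ W, ∀ μ ∈ M, w * μ * w⁻¹ ∈ M)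
    {Y : AddMonoid.End L} (hY : Y ∈ sB L M W) :
    ∀ X ∈ sB L M W, eps hinj (X * eps hinj Y) = eps hinj (X * Y) := by
  induction hY using Submodule.span_induction with
  | mem Y hYY =>
    obtain ⟨q, rfl⟩ := hYY
    intro X hX
    rw [eps_genB, eS_eq_eB L M W q.2]
    have hq1 : eB L M W (⟨1, M.one_mem⟩, q.2) ∈ sB L M W := Submodule.subset_span ⟨_, rfl⟩
    have hq2 : eB L M W q ∈ sB L M W := Submodule.subset_span ⟨_, rfl⟩
    induction hX using Submodule.span_induction with
    | mem X hXX =>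
      obtain ⟨p, rfl⟩ := hXX
      rw [← eB_pmul hconj, ← eB_pmul hconj, eps_genB, eps_genB]
      rfl
    | zero => rw [zero_mul, zero_mul]
    | add X₁ X₂ h1 h2 ih1 ih2 =>
      rw [add_mul, add_mul, eps_add hinj (sB_mul_mem hconj h1 hq1) (sB_mul_mem hconj h2 hq1),
        eps_add hinj (sB_mul_mem hconj h1 hq2) (sB_mul_mem hconj h2 hq2), ih1, ih2]
    | smul c X₁ h1 ih =>
      rw [smul_mul'', smul_mul'', eps_smul hinj c (sB_mul_mem hconj h1 hq1),
        eps_smul hinj c (sB_mul_mem hconj h1 hq2), ih]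
  | zero =>
    intro X hX
    rw [eps_zero, mul_zero]
  | add Y₁ Y₂ h1 h2 ih1 ih2 =>
    intro X hX
    have e1 : eps hinj Y₁ ∈ sB L M W := sS_le_sB L M W (eps_mem_sS hinj h1)
    have e2 : eps hinj Y₂ ∈ sB L M W := sS_le_sB L M W (eps_mem_sS hinj h2)
    rw [eps_add hinj h1 h2, mul_add, mul_add,
      eps_add hinj (sB_mul_mem hconj hX e1) (sB_mul_mem hconj hX e2),
      eps_add hinj (sB_mul_mem hconj hX h1) (sB_mul_mem hconj hX h2),
      ih1 X hX, ih2 X hX]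
  | smul c Y₁ h1 ih =>
    intro X hX
    rw [eps_smul hinj c h1, ← mulE_mul, ← mulE_mul, ← mul_assoc, ← mul_assoc,
      ih (X * mulE L c) (sB_mul_mem hconj hX (mulE_mem_sB c))]

end EpsAux

open EpsLemma in
/-- Let `L` be a field, `M` a monoid of ring automorphisms of `L`, `W` a
finite group of ring automorphisms of `L`, with `wMw⁻¹ ⊆ M` for `w ∈ W` and such that
`(μ, w) ↦ μ∘w` is injective on `M × W`.  (a) There is a unique left `L#W`-module
homomorphism `ε : 𝓛#W → L#W` with `ε(a·μw) = a·w`, and it satisfies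
`ε(X·ε(Y)) = ε(X·Y)`.  (b) The map `X ↦ (a ↦ ε(X·a))` is a ring homomorphism from `𝓛#W`
to the endomorphism ring of the additive group of `L#W`. -/
theorem statement15 (L : Type) [Field L]
    (M : Submonoid (RingAut L)) (W : Subgroup (RingAut L)) [Finite ↥W]
    (hconj : ∀ w ∈ W, ∀ μ ∈ M, w * μ * w⁻¹ ∈ M)
    (hinj : ∀ μ₁ ∈ M, ∀ μ₂ ∈ M, ∀ w₁ ∈ W, ∀ w₂ ∈ W,
      μ₁ * w₁ = μ₂ * w₂ → μ₁ = μ₂ ∧ w₁ = w₂) :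
    ∃ ε : AddMonoid.End L → AddMonoid.End L,
      IsEps L M W ε
      -- uniqueness of ε (on `𝓛#W`)
      ∧ (∀ ε' : AddMonoid.End L → AddMonoid.End L, IsEps L M W ε' →
          ∀ x ∈ bigL L M W, ε' x = ε x)
      -- (a): `ε(X·ε(Y)) = ε(X·Y)`
      ∧ (∀ X ∈ bigL L M W, ∀ Y ∈ bigL L M W, ε (X * ε Y) = ε (X * Y))
      -- (b): `X ↦ (a ↦ ε(X·a))` is a ring homomorphism `𝓛#W → End(L#W, +)`:
      -- it is multiplicative, additive and unital.
      ∧ (∀ X ∈ bigL L M W, ∀ Y ∈ bigL L M W, ∀ a ∈ smallL L W,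
          ε (X * ε (Y * a)) = ε (X * Y * a))
      ∧ (∀ X ∈ bigL L M W, ∀ Y ∈ bigL L M W, ∀ a ∈ smallL L W,
          ε ((X + Y) * a) = ε (X * a) + ε (Y * a))
      ∧ (∀ a ∈ smallL L W, ε (1 * a) = a) := by
  refine ⟨EpsAux.eps hinj, ⟨?_, ?_, ?_, ?_⟩, ?_, ?_, ?_, ?_, ?_⟩
  · intro x hx
    exact (EpsAux.mem_smallL_iff).mpr
      (EpsAux.eps_mem_sS hinj ((EpsAux.mem_bigL_iff hconj).mp hx))
  · intro x hx y hy
    exact EpsAux.eps_add hinj ((EpsAux.mem_bigL_iff hconj).mp hx)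
      ((EpsAux.mem_bigL_iff hconj).mp hy)
  · intro z hz x hx
    exact EpsAux.eps_mulhom hinj hconj (EpsAux.mem_smallL_iff.mp hz)
      ((EpsAux.mem_bigL_iff hconj).mp hx)
  · intro a μ hμ w hw
    rw [EpsAux.mulE_mul, EpsAux.mulE_mul]
    exact EpsAux.eps_gen hinj a (⟨μ, hμ⟩, ⟨w, hw⟩)
  · intro ε' hε' x hx
    obtain ⟨h1, h2, h3, h4⟩ := hε'
    have hx' := (EpsAux.mem_bigL_iff hconj).mp hx
    clear hx
    induction hx' using Submodule.span_induction with
    | mem y hy =>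
      obtain ⟨p, rfl⟩ := hy
      have e1 : EpsAux.eB L M W p = ofAut L ((p.1 : RingAut L) * p.2) := rfl
      have h5 := h4 1 (p.1 : RingAut L) p.1.2 (p.2 : RingAut L) p.2.2
      rw [EpsAux.mulE_one, one_mul, one_mul] at h5
      rw [e1, h5, ← e1, EpsAux.eps_genB hinj]
      rfl
    | zero =>
      have h5 := h4 0 1 M.one_mem 1 W.one_mem
      rw [EpsAux.mulE_zero, zero_mul, zero_mul] at h5
      rw [h5, EpsAux.eps_zero hinj]
    | add y z hy hz ihy ihz =>
      rw [h2 y ((EpsAux.mem_bigL_iff hconj).mpr hy) z ((EpsAux.mem_bigL_iff hconj).mpr hz),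
        ihy, ihz, EpsAux.eps_add hinj hy hz]
    | smul c y hy ihy =>
      have hc : mulE L c ∈ smallL L W := Subring.subset_closure (Or.inl ⟨c, rfl⟩)
      rw [← EpsAux.mulE_mul, h3 _ hc y ((EpsAux.mem_bigL_iff hconj).mpr hy), ihy,
        EpsAux.mulE_mul, ← EpsAux.eps_smul hinj c hy, EpsAux.mulE_mul L c y]
  · intro X hX Y hY
    exact EpsAux.eps_proj hinj hconj ((EpsAux.mem_bigL_iff hconj).mp hY) X
      ((EpsAux.mem_bigL_iff hconj).mp hX)
  · intro X hX Y hY a ha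
    have hX' := (EpsAux.mem_bigL_iff hconj).mp hX
    have hY' := (EpsAux.mem_bigL_iff hconj).mp hY
    have ha' := EpsAux.sS_le_sB L M W (EpsAux.mem_smallL_iff.mp ha)
    have hYa : Y * a ∈ EpsAux.sB L M W := EpsAux.sB_mul_mem hconj hY' ha'
    rw [EpsAux.eps_proj hinj hconj hYa X hX', mul_assoc]
  · intro X hX Y hY a ha
    have hX' := (EpsAux.mem_bigL_iff hconj).mp hX
    have hY' := (EpsAux.mem_bigL_iff hconj).mp hY
    have ha' := EpsAux.sS_le_sB L M W (EpsAux.mem_smallL_iff.mp ha)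
    rw [add_mul]
    exact EpsAux.eps_add hinj (EpsAux.sB_mul_mem hconj hX' ha')
      (EpsAux.sB_mul_mem hconj hY' ha')
  · intro a ha
    rw [one_mul]
    exact EpsAux.eps_id hinj (EpsAux.mem_smallL_iff.mp ha)
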